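/- Let δ ∈ (0,1), let t > 0 be fixed, define A(θ) = θδ·∫_0^1 s^{−δ}/(1+θs) ds and B(θ) = θ²δ·∫_0^1 s^{1−δ}/(1+θs)² ds, and for p ∈ (0,1] set θ_p = (t/p)^{1/δ}. Then lim_{p→0⁺} [ 1/(1 + 2p·A(θ_p) − p²·B(θ_p)) − 1/(1 + p·A(θ_p))² ] = sinc δ/(2t + sinc δ) − (sinc δ/(t + sinc δ))², where sinc δ = sin(πδ)/(πδ). (This is the limit of the variance M₂ − M₁² of the conditional success probability in a Poisson cellular network as the base-station activity probability p → 0 with pθ^δ = t held constant; in contrast to the bipolar case, this limit is strictly positive for all t > 0.) -/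

import Mathlib

open Real MeasureTheory Filter

open Set intervalIntegral

lemma real_beta_val {a : ℝ} (ha : 0 < a) (ha1 : a < 1) :
    IntegrableOn (fun y : ℝ => y ^ (a - 1) * (1 - y) ^ (-a)) (Ioo 0 1) ∧
      ∫ y in Ioo (0:ℝ) 1, y ^ (a - 1) * (1 - y) ^ (-a) = π / Real.sin (π * a) := by
  have hu : (0:ℝ) < (Complex.re (a : ℂ)) := by simpa using ha
  have hv : (0:ℝ) < (Complex.re (1 - (a : ℂ))) := by simpa using ha1
  have hconv := Complex.betaIntegral_convergent hu hv
  -- pointwise equality on Ioo 0 1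
  have hpt : ∀ y ∈ Ioo (0:ℝ) 1,
      (y : ℂ) ^ ((a : ℂ) - 1) * (1 - (y : ℂ)) ^ ((1 - (a : ℂ)) - 1)
        = ((y ^ (a - 1) * (1 - y) ^ (-a) : ℝ) : ℂ) := by
    intro y hy
    have hy0 : (0:ℝ) ≤ y := hy.1.le
    have hy1 : (0:ℝ) ≤ 1 - y := by linarith [hy.2]
    rw [Complex.ofReal_mul, Complex.ofReal_cpow hy0, Complex.ofReal_cpow hy1]
    push_cast
    ring_nf
  have hIoo : IntegrableOn
      (fun y : ℝ => (y : ℂ) ^ ((a : ℂ) - 1) * (1 - (y : ℂ)) ^ ((1 - (a : ℂ)) - 1))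
      (Ioo 0 1) := by
    have := (intervalIntegrable_iff_integrableOn_Ioo_of_le (by norm_num)).mp hconv
    exact this
  have hint : IntegrableOn (fun y : ℝ => y ^ (a - 1) * (1 - y) ^ (-a)) (Ioo 0 1) := by
    have hn := hIoo.norm
    refine hn.congr ?_
    filter_upwards [ae_restrict_mem measurableSet_Ioo] with y hy
    rw [hpt y hy, Complex.norm_real, Real.norm_eq_abs, abs_of_nonneg]
    exact mul_nonneg (Real.rpow_nonneg hy.1.le _) (Real.rpow_nonneg (by linarith [hy.2]) _)
  refine ⟨hint, ?_⟩
  -- value via complex Beta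
  have hβ : Complex.betaIntegral (a : ℂ) (1 - (a : ℂ)) = (π / Real.sin (π * a) : ℝ) := by
    have h1 := Complex.Gamma_mul_Gamma_eq_betaIntegral hu hv
    rw [show (a:ℂ) + (1 - (a:ℂ)) = 1 by ring, Complex.Gamma_one, one_mul] at h1
    rw [← h1, Complex.Gamma_mul_Gamma_one_sub]
    push_cast
    ring_nf
  have hβ2 : Complex.betaIntegral (a : ℂ) (1 - (a : ℂ))
      = ((∫ y in Ioo (0:ℝ) 1, y ^ (a - 1) * (1 - y) ^ (-a) : ℝ) : ℂ) := by
    rw [Complex.betaIntegral]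
    rw [intervalIntegral.integral_of_le (by norm_num : (0:ℝ) ≤ 1),
      MeasureTheory.integral_Ioc_eq_integral_Ioo]
    rw [setIntegral_congr_fun measurableSet_Ioo hpt]
    exact integral_ofReal
  have := hβ2.symm.trans hβ
  exact_mod_cast this

/-- `∫_0^∞ x^{a-1}/(1+x) dx = π / sin (π a)` for `a ∈ (0,1)`, with integrability. -/
lemma rpow_div_one_add_int {a : ℝ} (ha : 0 < a) (ha1 : a < 1) :
    IntegrableOn (fun x : ℝ => x ^ (a - 1) / (1 + x)) (Ioi 0) ∧
      ∫ x in Ioi (0:ℝ), x ^ (a - 1) / (1 + x) = π / Real.sin (π * a) := by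
  obtain ⟨hbint, hbval⟩ := real_beta_val ha ha1
  set f : ℝ → ℝ := fun y => y / (1 - y) with hf
  set f' : ℝ → ℝ := fun y => ((1 - y) ^ 2)⁻¹ with hf'
  have hderiv : ∀ y ∈ Ioo (0:ℝ) 1, HasDerivWithinAt f (f' y) (Ioo 0 1) y := by
    intro y hy
    have h2 : (1:ℝ) - y ≠ 0 := by have := hy.2; intro h; linarith [sub_eq_zero.mp h]
    have := (hasDerivAt_id y).div ((hasDerivAt_id y).const_sub 1) h2
    have heq : (1 * (1 - y) - y * -1) / (1 - y) ^ 2 = f' y := by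
      rw [hf', show (1 * (1 - y) - y * -1) = 1 from by ring, one_div]
    exact (heq ▸ this).hasDerivWithinAt
  have hinj : InjOn f (Ioo 0 1) := by
    intro x hx y hy h
    have hx2 : (1:ℝ) - x ≠ 0 := by have := hx.2; intro hh; linarith [sub_eq_zero.mp hh]
    have hy2 : (1:ℝ) - y ≠ 0 := by have := hy.2; intro hh; linarith [sub_eq_zero.mp hh]
    rw [hf, div_eq_div_iff hx2 hy2] at h  -- wrong lemma shape, fix below
    nlinarith [h]
  have himg : f '' Ioo 0 1 = Ioi (0:ℝ) := by
    ext x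
    constructor
    · rintro ⟨y, hy, rfl⟩
      exact div_pos hy.1 (by linarith [hy.2])
    · intro hx
      have hx0 : (0:ℝ) < x := hx
      refine ⟨x / (1 + x), ⟨div_pos hx0 (by linarith), (div_lt_one (by linarith)).mpr (by linarith)⟩, ?_⟩
      rw [hf]
      field_simp
      ring
  have key : ∀ y ∈ Ioo (0:ℝ) 1,
      |f' y| • ((f y) ^ (a - 1) / (1 + f y)) = y ^ (a - 1) * (1 - y) ^ (-a) := by
    intro y hy
    have h2 : (0:ℝ) < 1 - y := by linarith [hy.2]
    have h1y : 1 + y / (1 - y) = (1 - y)⁻¹ := by field_simp; ring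
    rw [smul_eq_mul, hf, hf']
    simp only
    rw [h1y, abs_of_pos (by positivity), Real.div_rpow hy.1.le h2.le]
    rw [show ((1 - y) ^ 2 : ℝ) = (1 - y) ^ (2:ℝ) by
      rw [← Real.rpow_natCast (1 - y) 2]; norm_num]
    rw [← Real.rpow_neg h2.le]
    rw [show (-a : ℝ) = -2 + (-(a - 1) + 1) from by ring, Real.rpow_add h2,
      Real.rpow_add h2, Real.rpow_one, Real.rpow_neg h2.le (a - 1)]
    simp only [div_eq_mul_inv, inv_inv]
    ring
  constructor
  · have hiff := integrableOn_image_iff_integrableOn_abs_deriv_smul measurableSet_Ioo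
      hderiv hinj (fun x => x ^ (a - 1) / (1 + x))
    rw [himg] at hiff
    rw [hiff]
    exact hbint.congr_fun (fun y hy => (key y hy).symm) measurableSet_Ioo
  · have hval := integral_image_eq_integral_abs_deriv_smul measurableSet_Ioo
      hderiv hinj (fun x => x ^ (a - 1) / (1 + x))
    rw [himg] at hval
    rw [hval, setIntegral_congr_fun measurableSet_Ioo key, hbval]

lemma ioo_scale (θ : ℝ) (hθ : 0 < θ) (g : ℝ → ℝ) :
    ∫ s in Ioo (0:ℝ) 1, g (θ * s) = θ⁻¹ * ∫ u in (0:ℝ)..θ, g u := by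
  rw [← MeasureTheory.integral_Ioc_eq_integral_Ioo,
    ← intervalIntegral.integral_of_le zero_le_one,
    intervalIntegral.integral_comp_mul_left g hθ.ne', mul_zero, mul_one, smul_eq_mul]

/-- For `δ ∈ (0,1)` and fixed `t > 0`, with `A(θ) = θδ ∫_0^1 s^{-δ}/(1+θs) ds`,
`B(θ) = θ²δ ∫_0^1 s^{1-δ}/(1+θs)² ds`, and `θ_p = (t/p)^{1/δ}`, the variance
`M₂ - M₁² = 1/(1 + 2p A(θ_p) - p² B(θ_p)) - 1/(1 + p A(θ_p))²` satisfies
`lim_{p→0⁺} (M₂ - M₁²) = sinc δ/(2t + sinc δ) - (sinc δ/(t + sinc δ))²`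
with `sinc δ = sin(πδ)/(πδ)`. -/
theorem cellular_variance_limit (δ t : ℝ) (hδ : δ ∈ Set.Ioo (0:ℝ) 1) (ht : 0 < t)
    (A B : ℝ → ℝ)
    (hA : ∀ θ : ℝ, A θ = θ * δ * ∫ s in Set.Ioo (0:ℝ) 1, s ^ (-δ) / (1 + θ * s))
    (hB : ∀ θ : ℝ, B θ = θ ^ 2 * δ * ∫ s in Set.Ioo (0:ℝ) 1, s ^ (1 - δ) / (1 + θ * s) ^ 2) :
    Tendsto
      (fun p : ℝ =>
        1 / (1 + 2 * p * A ((t / p) ^ (1 / δ)) - p ^ 2 * B ((t / p) ^ (1 / δ))) -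
          1 / (1 + p * A ((t / p) ^ (1 / δ))) ^ 2)
      (nhdsWithin 0 (Set.Ioi 0))
      (nhds (Real.sin (π * δ) / (π * δ) / (2 * t + Real.sin (π * δ) / (π * δ)) -
        (Real.sin (π * δ) / (π * δ) / (t + Real.sin (π * δ) / (π * δ))) ^ 2)) := by
  obtain ⟨hδ0, hδ1⟩ := hδ
  have hsin : 0 < Real.sin (π * δ) :=
    Real.sin_pos_of_pos_of_lt_pi (by positivity) (by nlinarith [Real.pi_pos])
  set F : ℝ → ℝ := fun u => u ^ (-δ) / (1 + u) with hF
  set G : ℝ → ℝ := fun u => u ^ (1 - δ) / (1 + u) ^ 2 with hG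
  -- integrability and value of F on (0, ∞)
  obtain ⟨hFint, hFval⟩ := rpow_div_one_add_int (a := 1 - δ) (by linarith) (by linarith)
  rw [show (1 - δ) - 1 = -δ from by ring] at hFint hFval
  rw [show π * (1 - δ) = π - π * δ from by ring, Real.sin_pi_sub] at hFval
  have hFint' : IntegrableOn F (Ioi 0) := hFint
  have hFval' : ∫ x in Ioi (0:ℝ), F x = π / Real.sin (π * δ) := hFval
  -- integrability of G on (0, ∞)
  have hGint : IntegrableOn G (Ioi 0) := by
    refine Integrable.mono hFint' ?_ ?_
    · apply Measurable.aestronglyMeasurable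
      fun_prop
    · filter_upwards [ae_restrict_mem measurableSet_Ioi] with u hu
      have hu0 : (0:ℝ) < u := hu
      have h1u : (0:ℝ) < 1 + u := by linarith
      rw [Real.norm_eq_abs, Real.norm_eq_abs, abs_of_nonneg (by positivity),
        abs_of_nonneg (by positivity)]
      rw [hG, hF]
      simp only
      rw [show (1 : ℝ) - δ = -δ + 1 from by ring, Real.rpow_add hu0, Real.rpow_one]
      rw [div_le_div_iff₀ (by positivity) h1u]
      have : u ≤ 1 + u := by linarith
      calc u ^ (-δ) * u * (1 + u) ≤ u ^ (-δ) * (1 + u) * (1 + u) := by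
            have := Real.rpow_nonneg hu0.le (-δ); nlinarith
        _ = u ^ (-δ) * (1 + u) ^ 2 := by ring
  -- θ_p → ∞
  have hθtop : Filter.Tendsto (fun p : ℝ => (t / p) ^ (1 / δ)) (nhdsWithin 0 (Set.Ioi 0))
      Filter.atTop := by
    apply (tendsto_rpow_atTop (by positivity : 0 < 1 / δ)).comp
    have h1 : Filter.Tendsto (fun p : ℝ => t * p⁻¹) (nhdsWithin 0 (Set.Ioi 0)) Filter.atTop :=
      Filter.Tendsto.const_mul_atTop ht tendsto_inv_nhdsGT_zero
    exact h1.congr fun p => (div_eq_mul_inv t p).symm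
  -- limits of the running integrals
  have hIA : Filter.Tendsto (fun p : ℝ => ∫ u in (0:ℝ)..(t / p) ^ (1 / δ), F u)
      (nhdsWithin 0 (Set.Ioi 0)) (nhds (π / Real.sin (π * δ))) := by
    have := MeasureTheory.intervalIntegral_tendsto_integral_Ioi 0 hFint' hθtop
    rwa [hFval'] at this
  set CG : ℝ := ∫ x in Ioi (0:ℝ), G x with hCG
  have hIB : Filter.Tendsto (fun p : ℝ => ∫ u in (0:ℝ)..(t / p) ^ (1 / δ), G u)
      (nhdsWithin 0 (Set.Ioi 0)) (nhds CG) :=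
    MeasureTheory.intervalIntegral_tendsto_integral_Ioi 0 hGint hθtop
  -- the two moment expressions, rewritten
  have hx : ∀ p ∈ Set.Ioi (0:ℝ), p * A ((t / p) ^ (1 / δ))
      = t * δ * ∫ u in (0:ℝ)..(t / p) ^ (1 / δ), F u := by
    intro p hp
    have hp0 : (0:ℝ) < p := hp
    set θ : ℝ := (t / p) ^ (1 / δ) with hθdef
    have htp : (0:ℝ) < t / p := div_pos ht hp0
    have hθ0 : 0 < θ := Real.rpow_pos_of_pos htp _
    have hθδ : θ ^ δ = t / p := by
      rw [hθdef, ← Real.rpow_mul htp.le, one_div, inv_mul_cancel₀ (ne_of_gt hδ0),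
        Real.rpow_one]
    have hpt1 : ∀ s ∈ Ioo (0:ℝ) 1, s ^ (-δ) / (1 + θ * s) = θ ^ δ * F (θ * s) := by
      intro s hs
      have hs0 : (0:ℝ) < s := hs.1
      have hc : θ ^ δ * θ ^ (-δ) = 1 := by
        rw [← Real.rpow_add hθ0]; simp
      rw [hF]
      simp only
      rw [Real.mul_rpow hθ0.le hs0.le, ← mul_div_assoc, ← mul_assoc, hc, one_mul]
    rw [hA, setIntegral_congr_fun measurableSet_Ioo hpt1, MeasureTheory.integral_const_mul,
      ioo_scale θ hθ0 F, hθδ]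
    field_simp
  have hy : ∀ p ∈ Set.Ioi (0:ℝ), p ^ 2 * B ((t / p) ^ (1 / δ))
      = p * (t * δ * ∫ u in (0:ℝ)..(t / p) ^ (1 / δ), G u) := by
    intro p hp
    have hp0 : (0:ℝ) < p := hp
    set θ : ℝ := (t / p) ^ (1 / δ) with hθdef
    have htp : (0:ℝ) < t / p := div_pos ht hp0
    have hθ0 : 0 < θ := Real.rpow_pos_of_pos htp _
    have hθδ : θ ^ δ = t / p := by
      rw [hθdef, ← Real.rpow_mul htp.le, one_div, inv_mul_cancel₀ (ne_of_gt hδ0),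
        Real.rpow_one]
    have hpt1 : ∀ s ∈ Ioo (0:ℝ) 1, s ^ (1 - δ) / (1 + θ * s) ^ 2
        = θ ^ δ * θ⁻¹ * G (θ * s) := by
      intro s hs
      have hs0 : (0:ℝ) < s := hs.1
      have hc : θ ^ δ * θ⁻¹ * θ ^ (1 - δ) = 1 := by
        rw [show θ⁻¹ = θ ^ (-1 : ℝ) from (Real.rpow_neg_one θ).symm,
          ← Real.rpow_add hθ0, ← Real.rpow_add hθ0,
          show δ + -1 + (1 - δ) = 0 from by ring, Real.rpow_zero]
      rw [hG]
      simp only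
      rw [Real.mul_rpow hθ0.le hs0.le, ← mul_div_assoc, ← mul_assoc, hc, one_mul]
    rw [hB, setIntegral_congr_fun measurableSet_Ioo hpt1, MeasureTheory.integral_const_mul,
      ioo_scale θ hθ0 G, hθδ]
    have hθne : θ ≠ 0 := hθ0.ne'
    field_simp
  -- combine the limits
  set S : ℝ := Real.sin (π * δ) / (π * δ) with hS
  have hS0 : 0 < S := by positivity
  set X : ℝ := t * δ * (π / Real.sin (π * δ)) with hX
  have hX0 : 0 < X := by positivity
  have hxlim : Filter.Tendsto (fun p : ℝ => t * δ * ∫ u in (0:ℝ)..(t / p) ^ (1 / δ), F u)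
      (nhdsWithin 0 (Set.Ioi 0)) (nhds X) := by
    exact (hIA.const_mul (t * δ)).congr (fun p => rfl)
  have hylim : Filter.Tendsto
      (fun p : ℝ => p * (t * δ * ∫ u in (0:ℝ)..(t / p) ^ (1 / δ), G u))
      (nhdsWithin 0 (Set.Ioi 0)) (nhds 0) := by
    have hp : Filter.Tendsto (fun p : ℝ => p) (nhdsWithin 0 (Set.Ioi 0)) (nhds 0) :=
      (continuous_id.tendsto 0).mono_left nhdsWithin_le_nhds
    have := hp.mul ((hIB.const_mul (t * δ)).congr (fun p => rfl))
    simpa using this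
  have hden1 : Filter.Tendsto
      (fun p : ℝ => 1 + 2 * (t * δ * ∫ u in (0:ℝ)..(t / p) ^ (1 / δ), F u)
        - p * (t * δ * ∫ u in (0:ℝ)..(t / p) ^ (1 / δ), G u))
      (nhdsWithin 0 (Set.Ioi 0)) (nhds (1 + 2 * X - 0)) :=
    (tendsto_const_nhds.add (hxlim.const_mul 2)).sub hylim
  have hden2 : Filter.Tendsto
      (fun p : ℝ => (1 + t * δ * ∫ u in (0:ℝ)..(t / p) ^ (1 / δ), F u) ^ 2)
      (nhdsWithin 0 (Set.Ioi 0)) (nhds ((1 + X) ^ 2)) :=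
    (tendsto_const_nhds.add hxlim).pow 2
  have hmain : Filter.Tendsto
      (fun p : ℝ =>
        1 / (1 + 2 * (t * δ * ∫ u in (0:ℝ)..(t / p) ^ (1 / δ), F u)
          - p * (t * δ * ∫ u in (0:ℝ)..(t / p) ^ (1 / δ), G u))
        - 1 / (1 + t * δ * ∫ u in (0:ℝ)..(t / p) ^ (1 / δ), F u) ^ 2)
      (nhdsWithin 0 (Set.Ioi 0)) (nhds (1 / (1 + 2 * X - 0) - 1 / (1 + X) ^ 2)) :=
    (tendsto_const_nhds.div hden1 (ne_of_gt (by rw [sub_zero]; linarith))).sub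
      (tendsto_const_nhds.div hden2 (pow_ne_zero 2 (ne_of_gt (by linarith))))
  have hval : 1 / (1 + 2 * X - 0) - 1 / (1 + X) ^ 2
      = S / (2 * t + S) - (S / (t + S)) ^ 2 := by
    have hXS : X = t / S := by rw [hX, hS, div_div_eq_mul_div]; ring
    have e1 : 1 + 2 * (t / S) = (2 * t + S) / S := by
      rw [add_div, div_self hS0.ne', mul_div_assoc, add_comm]
    have e2 : 1 + t / S = (t + S) / S := by rw [add_div, div_self hS0.ne', add_comm]
    rw [hXS, sub_zero, e1, e2]
    simp only [div_pow, one_div_div]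
  rw [show Real.sin (π * δ) / (π * δ) / (2 * t + Real.sin (π * δ) / (π * δ)) -
        (Real.sin (π * δ) / (π * δ) / (t + Real.sin (π * δ) / (π * δ))) ^ 2
      = S / (2 * t + S) - (S / (t + S)) ^ 2 from rfl, ← hval]
  refine hmain.congr' ?_
  filter_upwards [self_mem_nhdsWithin] with p hp
  rw [show 2 * p * A ((t / p) ^ (1 / δ)) = 2 * (p * A ((t / p) ^ (1 / δ))) from by ring,
    hx p hp, hy p hp]
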